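/- Let Σ, Σ̂ ∈ ℝ^{d×d} be symmetric invertible matrices and let x, μ, μ̂ ∈ ℝ^d. Then the plug-in vector-based Mahalanobis squared distance satisfies the deterministic perturbation bound |(x − μ̂)ᵀ Σ̂⁻¹ (x − μ̂) − (x − μ)ᵀ Σ⁻¹ (x − μ)| ≤ ‖Σ⁻¹‖ ‖Σ̂⁻¹‖ ‖Σ̂ − Σ‖ ‖x − μ‖² + 2 ‖Σ̂⁻¹‖ ‖x − μ‖ ‖μ̂ − μ‖ + ‖Σ̂⁻¹‖ ‖μ̂ − μ‖², where ‖·‖ on matrices denotes the ℓ²-operator norm and ‖·‖ on vectors the Euclidean norm. -/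

import Mathlib

open Matrix

/-- The ℓ²-operator norm of a real matrix, i.e. the operator norm of the associated
linear map between Euclidean spaces. -/
noncomputable def opNorm {m n : ℕ} (A : Matrix (Fin m) (Fin n) ℝ) : ℝ :=
  ‖LinearMap.toContinuousLinearMap (Matrix.toEuclideanLin A)‖

/-- The Euclidean norm of a vector in `ℝ^d`. -/
noncomputable def eNorm {d : ℕ} (x : Fin d → ℝ) : ℝ :=
  Real.sqrt (x ⬝ᵥ x)


lemma eNorm_eq {d : ℕ} (x : Fin d → ℝ) :
    eNorm x = ‖(WithLp.equiv 2 (Fin d → ℝ)).symm x‖ := by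
  rw [eNorm, EuclideanSpace.norm_eq]
  congr 1
  simp [dotProduct, Real.norm_eq_abs, sq_abs, sq]

lemma eNorm_nonneg {d : ℕ} (x : Fin d → ℝ) : 0 ≤ eNorm x := Real.sqrt_nonneg _

lemma opNorm_nonneg {d : ℕ} (A : Matrix (Fin d) (Fin d) ℝ) : 0 ≤ opNorm A :=
  norm_nonneg _

lemma abs_dot_le {d : ℕ} (u v : Fin d → ℝ) : |u ⬝ᵥ v| ≤ eNorm u * eNorm v := by
  have h := abs_real_inner_le_norm ((WithLp.equiv 2 (Fin d → ℝ)).symm u)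
    ((WithLp.equiv 2 (Fin d → ℝ)).symm v)
  rw [eNorm_eq, eNorm_eq]
  convert h using 2
  simp [PiLp.inner_apply, dotProduct, mul_comm]

lemma eNorm_mulVec_le {d : ℕ} (A : Matrix (Fin d) (Fin d) ℝ) (v : Fin d → ℝ) :
    eNorm (A *ᵥ v) ≤ opNorm A * eNorm v := by
  have h := (LinearMap.toContinuousLinearMap (Matrix.toEuclideanLin A)).le_opNorm
    ((WithLp.equiv 2 (Fin d → ℝ)).symm v)
  rw [eNorm_eq, eNorm_eq]
  exact h

lemma abs_dot_mulVec_le {d : ℕ} (A : Matrix (Fin d) (Fin d) ℝ) (u v : Fin d → ℝ) :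
    |u ⬝ᵥ A *ᵥ v| ≤ opNorm A * eNorm u * eNorm v := by
  calc |u ⬝ᵥ A *ᵥ v| ≤ eNorm u * eNorm (A *ᵥ v) := abs_dot_le _ _
    _ ≤ eNorm u * (opNorm A * eNorm v) :=
        mul_le_mul_of_nonneg_left (eNorm_mulVec_le A v) (eNorm_nonneg u)
    _ = opNorm A * eNorm u * eNorm v := by ring


/-- Deterministic perturbation bound for the plug-in vector-based Mahalanobis squared
distance: for symmetric invertible `S, Ŝ ∈ ℝ^{d×d}` and `x, μ, μ̂ ∈ ℝ^d`,
`|(x − μ̂)ᵀ Ŝ⁻¹ (x − μ̂) − (x − μ)ᵀ S⁻¹ (x − μ)|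
  ≤ ‖S⁻¹‖ ‖Ŝ⁻¹‖ ‖Ŝ − S‖ ‖x − μ‖² + 2 ‖Ŝ⁻¹‖ ‖x − μ‖ ‖μ̂ − μ‖ + ‖Ŝ⁻¹‖ ‖μ̂ − μ‖²`,
with operator norms on matrices and Euclidean norms on vectors. -/
theorem plugin_vector_msd_perturbation_bound {d : ℕ}
    (S Shat : Matrix (Fin d) (Fin d) ℝ)
    (hS_symm : Sᵀ = S) (hShat_symm : Shatᵀ = Shat)
    (hS : IsUnit S.det) (hShat : IsUnit Shat.det)
    (x μ μhat : Fin d → ℝ) :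
    |(x - μhat) ⬝ᵥ Shat⁻¹ *ᵥ (x - μhat) - (x - μ) ⬝ᵥ S⁻¹ *ᵥ (x - μ)| ≤
      opNorm S⁻¹ * opNorm Shat⁻¹ * opNorm (Shat - S) * eNorm (x - μ) ^ 2
        + 2 * opNorm Shat⁻¹ * eNorm (x - μ) * eNorm (μhat - μ)
        + opNorm Shat⁻¹ * eNorm (μhat - μ) ^ 2 := by
  set u := x - μ with hu
  set e := μhat - μ with he
  have hxe : x - μhat = u - e := by
    funext i
    simp only [hu, he, Pi.sub_apply]
    ring
  have h1 : S⁻¹ * S = 1 := Matrix.nonsing_inv_mul S hS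
  have h2 : Shat * Shat⁻¹ = 1 := Matrix.mul_nonsing_inv Shat hShat
  have h3 : S⁻¹ * (Shat - S) * Shat⁻¹ = S⁻¹ - Shat⁻¹ := by
    rw [Matrix.mul_sub, Matrix.sub_mul, Matrix.mul_assoc, h2, Matrix.mul_one, h1,
      Matrix.one_mul]
  have hT1eq : u ⬝ᵥ (S⁻¹ * (Shat - S) * Shat⁻¹) *ᵥ u
      = u ⬝ᵥ S⁻¹ *ᵥ u - u ⬝ᵥ Shat⁻¹ *ᵥ u := by
    rw [h3, Matrix.sub_mulVec, dotProduct_sub]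
  have key : (x - μhat) ⬝ᵥ Shat⁻¹ *ᵥ (x - μhat) - (x - μ) ⬝ᵥ S⁻¹ *ᵥ (x - μ)
      = -(u ⬝ᵥ (S⁻¹ * (Shat - S) * Shat⁻¹) *ᵥ u)
        - u ⬝ᵥ Shat⁻¹ *ᵥ e - e ⬝ᵥ Shat⁻¹ *ᵥ u + e ⬝ᵥ Shat⁻¹ *ᵥ e := by
    rw [hxe, hT1eq]
    have expand : (u - e) ⬝ᵥ Shat⁻¹ *ᵥ (u - e)
        = u ⬝ᵥ Shat⁻¹ *ᵥ u - u ⬝ᵥ Shat⁻¹ *ᵥ e - e ⬝ᵥ Shat⁻¹ *ᵥ u + e ⬝ᵥ Shat⁻¹ *ᵥ e := by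
      rw [Matrix.mulVec_sub, sub_dotProduct, dotProduct_sub, dotProduct_sub]
      ring
    rw [expand]
    ring
  -- bounds
  have hnu := eNorm_nonneg u
  have hne := eNorm_nonneg e
  have hnS := opNorm_nonneg S⁻¹
  have hnSh := opNorm_nonneg Shat⁻¹
  have hnD := opNorm_nonneg (Shat - S)
  have b1 : |u ⬝ᵥ (S⁻¹ * (Shat - S) * Shat⁻¹) *ᵥ u|
      ≤ opNorm S⁻¹ * opNorm Shat⁻¹ * opNorm (Shat - S) * eNorm u ^ 2 := by
    have hv : (S⁻¹ * (Shat - S) * Shat⁻¹) *ᵥ u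
        = S⁻¹ *ᵥ ((Shat - S) *ᵥ (Shat⁻¹ *ᵥ u)) := by
      rw [← Matrix.mulVec_mulVec, ← Matrix.mulVec_mulVec]
    rw [hv]
    have c1 : |u ⬝ᵥ S⁻¹ *ᵥ ((Shat - S) *ᵥ (Shat⁻¹ *ᵥ u))|
        ≤ opNorm S⁻¹ * eNorm u * eNorm ((Shat - S) *ᵥ (Shat⁻¹ *ᵥ u)) :=
      abs_dot_mulVec_le _ _ _
    have c2 : eNorm ((Shat - S) *ᵥ (Shat⁻¹ *ᵥ u))
        ≤ opNorm (Shat - S) * eNorm (Shat⁻¹ *ᵥ u) := eNorm_mulVec_le _ _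
    have c3 : eNorm (Shat⁻¹ *ᵥ u) ≤ opNorm Shat⁻¹ * eNorm u := eNorm_mulVec_le _ _
    have hw := eNorm_nonneg (Shat⁻¹ *ᵥ u)
    nlinarith [mul_nonneg hnS hnu, mul_nonneg hnD hw, mul_nonneg (mul_nonneg hnS hnu) hnD]
  have b2 : |u ⬝ᵥ Shat⁻¹ *ᵥ e| ≤ opNorm Shat⁻¹ * eNorm u * eNorm e :=
    abs_dot_mulVec_le _ _ _
  have b3 : |e ⬝ᵥ Shat⁻¹ *ᵥ u| ≤ opNorm Shat⁻¹ * eNorm e * eNorm u :=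
    abs_dot_mulVec_le _ _ _
  have b4 : |e ⬝ᵥ Shat⁻¹ *ᵥ e| ≤ opNorm Shat⁻¹ * eNorm e * eNorm e :=
    abs_dot_mulVec_le _ _ _
  rw [key]
  have habs : |-(u ⬝ᵥ (S⁻¹ * (Shat - S) * Shat⁻¹) *ᵥ u)
        - u ⬝ᵥ Shat⁻¹ *ᵥ e - e ⬝ᵥ Shat⁻¹ *ᵥ u + e ⬝ᵥ Shat⁻¹ *ᵥ e|
      ≤ |u ⬝ᵥ (S⁻¹ * (Shat - S) * Shat⁻¹) *ᵥ u| + |u ⬝ᵥ Shat⁻¹ *ᵥ e|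
        + |e ⬝ᵥ Shat⁻¹ *ᵥ u| + |e ⬝ᵥ Shat⁻¹ *ᵥ e| := by
    calc _ ≤ |-(u ⬝ᵥ (S⁻¹ * (Shat - S) * Shat⁻¹) *ᵥ u) - u ⬝ᵥ Shat⁻¹ *ᵥ e
            - e ⬝ᵥ Shat⁻¹ *ᵥ u| + |e ⬝ᵥ Shat⁻¹ *ᵥ e| := abs_add_le _ _
      _ ≤ |-(u ⬝ᵥ (S⁻¹ * (Shat - S) * Shat⁻¹) *ᵥ u) - u ⬝ᵥ Shat⁻¹ *ᵥ e|
            + |e ⬝ᵥ Shat⁻¹ *ᵥ u| + |e ⬝ᵥ Shat⁻¹ *ᵥ e| := by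
          gcongr
          exact abs_sub _ _
      _ ≤ _ := by
          have := abs_sub (-(u ⬝ᵥ (S⁻¹ * (Shat - S) * Shat⁻¹) *ᵥ u)) (u ⬝ᵥ Shat⁻¹ *ᵥ e)
          rw [abs_neg] at this
          linarith
  calc _ ≤ _ := habs
    _ ≤ _ := by nlinarith [sq_nonneg (eNorm u), sq_nonneg (eNorm e)]
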